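/- For every n ≥ 1, the number of elements of 𝔇_n^{catalan} equals the Catalan number C_n = (1/(n+1))·C(2n,n). -/

import Mathlib

def col (D : Finset (ℕ × ℕ)) (p : ℕ) : Finset (ℕ × ℕ) :=
  D.filter (fun q => q.1 = p)

/-- Membership in `𝔇_n^{catalan}`. -/
def IsCat (n : ℕ) (D : Finset (ℕ × ℕ)) : Prop :=
  D.card = n ∧
  (∀ p i : ℕ, (p, 0) ∈ D → i ≤ p → (i, 0) ∈ D) ∧
  (∀ p : ℕ,
    ((col D p).Nonempty →
      ((col D p).image Prod.snd).sup id + 1 ≤ (col D (p + 1)).card + (col D p).card) ∧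
    (col D p = ∅ → ∀ q ∈ D, q.1 < p))

namespace Cat9

open Finset

/-! ### rank: the `a`-th smallest element of a finset of naturals -/

noncomputable def rnk (a : ℕ) (s : Finset ℕ) : ℕ := sInf {v | a < (s.filter (· ≤ v)).card}

lemma rnk_min {a : ℕ} {s : Finset ℕ} {u : ℕ} (h : u < rnk a s) :
    ¬ a < (s.filter (· ≤ u)).card := by
  unfold rnk at h
  exact Nat.notMem_of_lt_sInf (s := {v | a < (s.filter (· ≤ v)).card}) h

lemma rnk_le_of {a : ℕ} {s : Finset ℕ} {v : ℕ} (h : a < (s.filter (· ≤ v)).card) :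
    rnk a s ≤ v := Nat.sInf_le h

lemma filter_le_insert {s : Finset ℕ} {v : ℕ} (hv : v ∈ s) :
    s.filter (· ≤ v) = insert v (s.filter (· < v)) := by
  ext x
  simp only [mem_filter, mem_insert]
  constructor
  · rintro ⟨hx, hxv⟩
    rcases lt_or_eq_of_le hxv with h | h
    · exact Or.inr ⟨hx, h⟩
    · exact Or.inl h
  · rintro (rfl | ⟨hx, hxv⟩)
    · exact ⟨hv, le_refl _⟩
    · exact ⟨hx, le_of_lt hxv⟩

lemma rnk_eq {a : ℕ} {s : Finset ℕ} {v : ℕ} (hv : v ∈ s)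
    (hc : (s.filter (· < v)).card = a) : rnk a s = v := by
  have hPv : a < (s.filter (· ≤ v)).card := by
    rw [filter_le_insert hv, card_insert_of_notMem (by simp)]
    omega
  refine le_antisymm (rnk_le_of hPv) ?_
  by_contra hlt
  push_neg at hlt
  have hmem : a < (s.filter (· ≤ rnk a s)).card :=
    Nat.sInf_mem (⟨v, hPv⟩ : Set.Nonempty {v | a < (s.filter (· ≤ v)).card})
  have hle : (s.filter (· ≤ rnk a s)).card ≤ (s.filter (· < v)).card := by
    apply card_le_card
    intro x hx
    simp only [mem_filter] at hx ⊢
    exact ⟨hx.1, lt_of_le_of_lt hx.2 hlt⟩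
  omega

lemma rnk_nonempty_aux {a : ℕ} {s : Finset ℕ} (h : a < s.card) :
    Set.Nonempty {v | a < (s.filter (· ≤ v)).card} :=
  ⟨s.sup id, by
    simp only [Set.mem_setOf_eq]
    have he : s.filter (· ≤ s.sup id) = s := filter_true_of_mem (fun x hx => le_sup (f := id) hx)
    rwa [he]⟩

lemma rnk_mem {a : ℕ} {s : Finset ℕ} (h : a < s.card) : rnk a s ∈ s := by
  have hmem : a < (s.filter (· ≤ rnk a s)).card := Nat.sInf_mem (rnk_nonempty_aux h)
  by_contra hns
  rcases Nat.eq_zero_or_pos (rnk a s) with h0 | hpos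
  · rw [h0] at hmem hns
    obtain ⟨x, hx⟩ := card_pos.mp (by omega : 0 < (s.filter (· ≤ 0)).card)
    simp only [mem_filter, Nat.le_zero] at hx
    exact hns (hx.2 ▸ hx.1)
  · have hu : ¬ a < (s.filter (· ≤ rnk a s - 1)).card := rnk_min (by omega)
    have heq : s.filter (· ≤ rnk a s) = s.filter (· ≤ rnk a s - 1) := by
      ext x
      simp only [mem_filter]
      constructor
      · rintro ⟨hx, hle⟩
        refine ⟨hx, ?_⟩
        rcases Nat.lt_or_ge x (rnk a s) with h' | h'
        · omega
        · exfalso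
          have hxe : x = rnk a s := by omega
          rw [hxe] at hx
          exact hns hx
      · exact fun ⟨hx, hle⟩ => ⟨hx, by omega⟩
    rw [heq] at hmem
    exact hu hmem

lemma rnk_filter_card {a : ℕ} {s : Finset ℕ} (h : a < s.card) :
    (s.filter (· < rnk a s)).card = a := by
  have hmem : a < (s.filter (· ≤ rnk a s)).card := Nat.sInf_mem (rnk_nonempty_aux h)
  have hv : rnk a s ∈ s := rnk_mem h
  have hins : (s.filter (· ≤ rnk a s)).card = (s.filter (· < rnk a s)).card + 1 := by
    rw [filter_le_insert hv, card_insert_of_notMem (by simp)]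
  have hup : (s.filter (· < rnk a s)).card ≤ a := by
    rcases Nat.eq_zero_or_pos (rnk a s) with h0 | hpos
    · have : s.filter (· < rnk a s) = ∅ := by
        rw [h0]; exact filter_false_of_mem (fun x _ => by omega)
      simp [this]
    · have hu : ¬ a < (s.filter (· ≤ rnk a s - 1)).card := rnk_min (by omega)
      have heq : s.filter (· < rnk a s) = s.filter (· ≤ rnk a s - 1) := by
        ext x
        simp only [mem_filter]
        exact ⟨fun ⟨hx, hle⟩ => ⟨hx, by omega⟩, fun ⟨hx, hle⟩ => ⟨hx, by omega⟩⟩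
      rw [heq]; omega
  omega

lemma le_rnk {a : ℕ} {s : Finset ℕ} (h : a < s.card) : a ≤ rnk a s := by
  have hc := rnk_filter_card h
  calc a = (s.filter (· < rnk a s)).card := hc.symm
    _ ≤ (range (rnk a s)).card := card_le_card (fun x hx => by
        simp only [mem_filter] at hx
        exact mem_range.mpr hx.2)
    _ = rnk a s := card_range _

/-! ### column functions -/

def Valid (f : ℕ → Finset ℕ) : Prop :=
  (∀ p, ∀ x ∈ f p, x < (f p).card + (f (p+1)).card) ∧
  (∀ p, (f p).Nonempty → 0 ∈ f p) ∧
  (∀ p, f p = ∅ → f (p+1) = ∅)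

def Bnd (f : ℕ → Finset ℕ) (k : ℕ) : Prop := ∀ p, k ≤ p → f p = ∅

def Total (f : ℕ → Finset ℕ) (n : ℕ) : Prop :=
  ∃ k, Bnd f k ∧ ∑ p ∈ Finset.range k, (f p).card = n

lemma empty_chain {f : ℕ → Finset ℕ} (hf : Valid f) {p q : ℕ} (h : f p = ∅)
    (hpq : p ≤ q) : f q = ∅ := by
  induction q, hpq using Nat.le_induction with
  | base => exact h
  | succ q hq ih => exact hf.2.2 q ih

lemma sum_ext {f : ℕ → Finset ℕ} {k K : ℕ} (hb : Bnd f k) (hk : k ≤ K) :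
    ∑ p ∈ Finset.range K, (f p).card = ∑ p ∈ Finset.range k, (f p).card := by
  refine (Finset.sum_subset (range_subset_range.mpr hk) ?_).symm
  intro x hx hnx
  simp only [mem_range] at hx hnx
  rw [hb x (by omega), card_empty]

lemma total_unique {f : ℕ → Finset ℕ} {n m : ℕ} (h1 : Total f n) (h2 : Total f m) :
    n = m := by
  obtain ⟨k1, hb1, hs1⟩ := h1
  obtain ⟨k2, hb2, hs2⟩ := h2
  have e1 := sum_ext hb1 (le_max_left k1 k2)
  have e2 := sum_ext hb2 (le_max_right k1 k2)
  omega

lemma bnd_of_total {f : ℕ → Finset ℕ} {n : ℕ} (hf : Valid f) (ht : Total f n) :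
    Bnd f n := by
  intro p hp
  by_contra hne
  have hall : ∀ q, q ≤ p → f q ≠ ∅ := fun q hq hq0 => hne (empty_chain hf hq0 hq)
  obtain ⟨k, hb, hs⟩ := ht
  have hpk : p < k := by
    by_contra h'
    exact hne (hb p (by omega))
  have hle : p + 1 ≤ ∑ q ∈ Finset.range k, (f q).card := by
    calc p + 1 = ∑ _q ∈ Finset.range (p+1), 1 := by simp
      _ ≤ ∑ q ∈ Finset.range (p+1), (f q).card := by
          refine Finset.sum_le_sum (fun i hi => ?_)
          simp only [mem_range] at hi
          exact card_pos.mpr (nonempty_iff_ne_empty.mpr (hall i (by omega)))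
      _ ≤ ∑ q ∈ Finset.range k, (f q).card := by
          refine Finset.sum_le_sum_of_subset (range_subset_range.mpr (by omega))
  omega

lemma total_sum {f : ℕ → Finset ℕ} {n : ℕ} (hf : Valid f) (ht : Total f n) :
    ∀ K, n ≤ K → ∑ p ∈ Finset.range K, (f p).card = n := by
  intro K hK
  obtain ⟨k, hb, hs⟩ := ht
  have hbK : Bnd f K := fun p hp => bnd_of_total hf ⟨k, hb, hs⟩ p (le_trans hK hp)
  have e1 := sum_ext hb (le_max_left k K)
  have e2 := sum_ext hbK (le_max_right k K)
  omega

lemma mem_lt_of_total {f : ℕ → Finset ℕ} {n : ℕ} (hf : Valid f) (ht : Total f n)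
    {p x : ℕ} (hx : x ∈ f p) : x < n := by
  have hxlt := hf.1 p x hx
  have hp : p < n := by
    by_contra h'
    rw [bnd_of_total hf ht p (by omega)] at hx
    exact absurd hx (notMem_empty x)
  have hsum := total_sum hf ht (n + 2) (by omega)
  have hsub : ({p, p+1} : Finset ℕ) ⊆ Finset.range (n+2) := by
    intro x hx'
    simp only [mem_insert, mem_singleton] at hx'
    rcases hx' with rfl | rfl <;> simp [mem_range] <;> omega
  have hpair : ∑ q ∈ ({p, p+1} : Finset ℕ), (f q).card = (f p).card + (f (p+1)).card :=
    Finset.sum_pair (by omega)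
  have hle : ∑ q ∈ ({p, p+1} : Finset ℕ), (f q).card ≤ ∑ q ∈ Finset.range (n+2), (f q).card :=
    Finset.sum_le_sum_of_subset hsub
  omega

/-! ### glue -/

def cns (s : Finset ℕ) (f : ℕ → Finset ℕ) : ℕ → Finset ℕ
  | 0 => s
  | p+1 => f p

def off (f : ℕ → Finset ℕ) (p : ℕ) : ℕ := (f p).card + (f (p+1)).card

def mer (f g : ℕ → Finset ℕ) (p : ℕ) : Finset ℕ := f p ∪ (g p).image (· + off f p)

def glue (f g : ℕ → Finset ℕ) : ℕ → Finset ℕ := mer (cns {0} f) g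

lemma valid_cns {f : ℕ → Finset ℕ} (hf : Valid f) : Valid (cns {0} f) := by
  obtain ⟨hmax, hzero, hchain⟩ := hf
  refine ⟨?_, ?_, ?_⟩
  · intro p x hx
    cases p with
    | zero =>
      simp only [cns, mem_singleton] at hx
      subst hx
      show 0 < ({0} : Finset ℕ).card + (f 0).card
      simp
    | succ q => exact hmax q x hx
  · intro p hp
    cases p with
    | zero => simp [cns]
    | succ q => exact hzero q hp
  · intro p hp
    cases p with
    | zero => simp [cns] at hp
    | succ q => exact hchain q hp

lemma mem_shifted {f g : ℕ → Finset ℕ} {p x : ℕ}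
    (hx : x ∈ (g p).image (· + off f p)) : off f p ≤ x := by
  obtain ⟨y, _, rfl⟩ := mem_image.mp hx
  omega

lemma mer_disj {f g : ℕ → Finset ℕ} (hf : Valid f) (p : ℕ) :
    Disjoint (f p) ((g p).image (· + off f p)) := by
  rw [disjoint_left]
  intro x hx hx'
  have h1 : x < off f p := hf.1 p x hx
  have h2 := mem_shifted (f := f) hx'
  omega

lemma mer_card {f g : ℕ → Finset ℕ} (hf : Valid f) (p : ℕ) :
    (mer f g p).card = (f p).card + (g p).card := by
  unfold mer
  rw [card_union_of_disjoint (mer_disj hf p),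
    card_image_of_injective _ (add_left_injective _)]

lemma valid_mer {f g : ℕ → Finset ℕ} (hf : Valid f) (hg : Valid g) :
    Valid (mer f g) := by
  refine ⟨?_, ?_, ?_⟩
  · intro p x hx
    rw [mer_card hf, mer_card hf]
    unfold mer at hx
    rcases mem_union.mp hx with h | h
    · have h1 := hf.1 p x h
      unfold off at h1
      omega
    · obtain ⟨y, hy, rfl⟩ := mem_image.mp h
      have h2 := hg.1 p y hy
      unfold off
      omega
  · intro p hp
    rcases (f p).eq_empty_or_nonempty with he | hne
    · have he1 : f (p+1) = ∅ := hf.2.2 p he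
      have hoff : off f p = 0 := by unfold off; rw [he, he1]; simp
      have hmer : mer f g p = g p := by
        unfold mer
        rw [he, hoff]
        simp
      rw [hmer] at hp ⊢
      exact hg.2.1 p hp
    · exact mem_union_left _ (hf.2.1 p hne)
  · intro p hp
    unfold mer at hp ⊢
    rw [union_eq_empty] at hp
    obtain ⟨h1, h2⟩ := hp
    rw [hf.2.2 p h1, hg.2.2 p (image_eq_empty.mp h2)]
    simp

lemma total_mer {f g : ℕ → Finset ℕ} {n1 n2 : ℕ} (hf : Valid f) (hg : Valid g)
    (h1 : Total f n1) (h2 : Total g n2) : Total (mer f g) (n1 + n2) := by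
  obtain ⟨k1, hb1, hs1⟩ := h1
  obtain ⟨k2, hb2, hs2⟩ := h2
  refine ⟨max k1 k2, ?_, ?_⟩
  · intro p hp
    unfold mer
    rw [hb1 p (by omega), hb2 p (by omega)]
    simp
  · have hc : ∀ p ∈ Finset.range (max k1 k2), (mer f g p).card = (f p).card + (g p).card :=
      fun p _ => mer_card hf p
    rw [Finset.sum_congr rfl hc, Finset.sum_add_distrib,
      sum_ext hb1 (le_max_left _ _), sum_ext hb2 (le_max_right _ _), hs1, hs2]

lemma total_cns {f : ℕ → Finset ℕ} {n1 : ℕ} (h1 : Total f n1) :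
    Total (cns {0} f) (n1 + 1) := by
  obtain ⟨k, hb, hs⟩ := h1
  refine ⟨k + 1, ?_, ?_⟩
  · intro p hp
    cases p with
    | zero => omega
    | succ q => exact hb q (by omega)
  · rw [Finset.sum_range_succ']
    simp only [cns]
    rw [hs, card_singleton]

lemma valid_glue {f g : ℕ → Finset ℕ} (hf : Valid f) (hg : Valid g) :
    Valid (glue f g) := valid_mer (valid_cns hf) hg

lemma total_glue {f g : ℕ → Finset ℕ} {n1 n2 : ℕ} (hf : Valid f) (hg : Valid g)
    (h1 : Total f n1) (h2 : Total g n2) : Total (glue f g) (n1 + n2 + 1) := by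
  have h := total_mer (valid_cns hf) hg (total_cns h1) h2
  rwa [show n1 + 1 + n2 = n1 + n2 + 1 by omega] at h

/-! ### split -/

noncomputable def A (f : ℕ → Finset ℕ) : ℕ → ℕ
  | 0 => 1
  | p+1 => (if A f p < (f p).card then rnk (A f p) (f p) else off f p) - A f p

noncomputable def O (f : ℕ → Finset ℕ) (p : ℕ) : ℕ :=
  if A f p < (f p).card then rnk (A f p) (f p) else off f p

noncomputable def tp (f : ℕ → Finset ℕ) (p : ℕ) : Finset ℕ := (f p).filter (· < O f p)

noncomputable def mp (f : ℕ → Finset ℕ) (p : ℕ) : Finset ℕ :=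
  ((f p).filter (fun x => O f p ≤ x)).image (· - O f p)

noncomputable def spL (f : ℕ → Finset ℕ) : ℕ → Finset ℕ := fun p => tp f (p+1)

section split
variable {f : ℕ → Finset ℕ} (hf : Valid f) (h0 : (f 0).Nonempty)

include hf h0

lemma A_le : ∀ p, A f p ≤ (f p).card := by
  intro p
  induction p with
  | zero => exact h0.card_pos
  | succ q ih =>
    have hAeq : A f (q+1) = (if A f q < (f q).card then rnk (A f q) (f q) else off f q) - A f q :=
      rfl
    by_cases hlt : A f q < (f q).card
    · rw [hAeq, if_pos hlt]
      have hvmem : rnk (A f q) (f q) ∈ f q := rnk_mem hlt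
      have hvlt : rnk (A f q) (f q) < (f q).card + (f (q+1)).card := hf.1 q _ hvmem
      have hflt : ((f q).filter (· < rnk (A f q) (f q))).card = A f q := rnk_filter_card hlt
      have hsplit := card_filter_add_card_filter_not
        (s := f q) (p := (· < rnk (A f q) (f q)))
      have hge : (f q).filter (fun x => ¬ x < rnk (A f q) (f q)) =
          insert (rnk (A f q) (f q)) ((f q).filter (fun x => rnk (A f q) (f q) < x)) := by
        ext x
        simp only [mem_filter, mem_insert, not_lt]
        constructor
        · rintro ⟨hx, hxe⟩
          rcases eq_or_lt_of_le hxe with h | h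
          · exact Or.inl h.symm
          · exact Or.inr ⟨hx, h⟩
        · rintro (rfl | ⟨hx, hxv⟩)
          · exact ⟨hvmem, le_refl _⟩
          · exact ⟨hx, le_of_lt hxv⟩
      have hins : ((f q).filter (fun x => ¬ x < rnk (A f q) (f q))).card =
          ((f q).filter (fun x => rnk (A f q) (f q) < x)).card + 1 := by
        rw [hge, card_insert_of_notMem (by simp)]
      have hsub : (f q).filter (fun x => rnk (A f q) (f q) < x) ⊆
          Ioo (rnk (A f q) (f q)) ((f q).card + (f (q+1)).card) := by
        intro x hx
        simp only [mem_filter, mem_Ioo] at hx ⊢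
        exact ⟨hx.2, hf.1 q x hx.1⟩
      have hIoo := card_le_card hsub
      rw [Nat.card_Ioo] at hIoo
      omega
    · rw [hAeq, if_neg hlt]
      unfold off
      omega

lemma O_eq (p : ℕ) : O f p = A f p + A f (p+1) := by
  have hle : A f p ≤ O f p := by
    unfold O
    by_cases hlt : A f p < (f p).card
    · rw [if_pos hlt]
      exact le_rnk hlt
    · rw [if_neg hlt]
      unfold off
      have := A_le hf h0 p
      omega
  have hAeq : A f (p+1) = O f p - A f p := rfl
  omega

lemma tp_card (p : ℕ) : (tp f p).card = A f p := by
  by_cases hlt : A f p < (f p).card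
  · have hO : O f p = rnk (A f p) (f p) := by unfold O; rw [if_pos hlt]
    unfold tp
    rw [hO]
    exact rnk_filter_card hlt
  · have ha : A f p = (f p).card := le_antisymm (A_le hf h0 p) (not_lt.mp hlt)
    have hO : O f p = off f p := by unfold O; rw [if_neg hlt]
    have htp : tp f p = f p := by
      unfold tp
      apply filter_true_of_mem
      intro x hx
      rw [hO]
      exact hf.1 p x hx
    rw [htp, ha]

lemma mp_card (p : ℕ) : (mp f p).card = (f p).card - A f p := by
  unfold mp
  have hinj : Set.InjOn (· - O f p) ((f p).filter (fun x => O f p ≤ x)) := by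
    intro x hx y hy hxy
    simp only [coe_filter, Set.mem_setOf_eq] at hx hy
    simp only at hxy
    omega
  rw [card_image_of_injOn hinj]
  have hsplit := card_filter_add_card_filter_not (s := f p) (p := (· < O f p))
  have hcongr : (f p).filter (fun x => ¬ x < O f p) = (f p).filter (fun x => O f p ≤ x) := by
    apply filter_congr
    intro x _
    simp [not_lt]
  have htp := tp_card hf h0 p
  unfold tp at htp
  rw [hcongr] at hsplit
  omega

lemma A_zero_succ {p : ℕ} (h : A f p = 0) : A f (p+1) = 0 := by
  have hAeq : A f (p+1) = O f p - A f p := rfl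
  have hO : O f p = 0 := by
    unfold O
    by_cases hlt : A f p < (f p).card
    · rw [if_pos hlt, h]
      apply rnk_eq (hf.2.1 p (card_pos.mp (by omega)))
      have he : (f p).filter (· < 0) = ∅ := filter_false_of_mem (fun x _ => Nat.not_lt_zero x)
      rw [he, card_empty]
    · rw [if_neg hlt]
      unfold off
      have he : f p = ∅ := card_eq_zero.mp (by omega)
      rw [he, hf.2.2 p he]
      simp
  omega

lemma valid_spL : Valid (spL f) := by
  refine ⟨?_, ?_, ?_⟩
  · intro p x hx
    simp only [spL, tp, mem_filter] at hx
    have h1 : (spL f p).card = A f (p+1) := tp_card hf h0 (p+1)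
    have h2 : (spL f (p+1)).card = A f (p+1+1) := tp_card hf h0 (p+1+1)
    have hO := O_eq hf h0 (p+1)
    rw [h1, h2]
    omega
  · intro p hp
    simp only [spL, tp] at hp ⊢
    obtain ⟨x, hx⟩ := hp
    simp only [mem_filter] at hx ⊢
    exact ⟨hf.2.1 (p+1) ⟨x, hx.1⟩, by omega⟩
  · intro p hp
    have h1 : A f (p+1) = 0 := by
      rw [← tp_card hf h0 (p+1)]
      simp only [spL] at hp
      rw [hp, card_empty]
    have h2 := A_zero_succ hf h0 h1
    have h3 := tp_card hf h0 (p+1+1)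
    simp only [spL]
    rw [← card_eq_zero]
    omega

lemma valid_mp : Valid (mp f) := by
  refine ⟨?_, ?_, ?_⟩
  · intro p x hx
    unfold mp at hx
    obtain ⟨y, hy, rfl⟩ := mem_image.mp hx
    simp only [mem_filter] at hy
    have hylt := hf.1 p y hy.1
    have hc1 := mp_card hf h0 p
    have hc2 := mp_card hf h0 (p+1)
    have hO := O_eq hf h0 p
    have hA1 := A_le hf h0 p
    have hA2 := A_le hf h0 (p+1)
    rw [hc1, hc2]
    omega
  · intro p hp
    obtain ⟨x, hx⟩ := hp
    unfold mp at hx ⊢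
    obtain ⟨y, hy, rfl⟩ := mem_image.mp hx
    simp only [mem_filter] at hy
    have hlt : A f p < (f p).card := by
      by_contra hn
      have hO : O f p = off f p := by unfold O; rw [if_neg hn]
      have := hf.1 p y hy.1
      unfold off at hO
      omega
    have hO : O f p = rnk (A f p) (f p) := by unfold O; rw [if_pos hlt]
    refine mem_image.mpr ⟨O f p, mem_filter.mpr ⟨?_, le_refl _⟩, Nat.sub_self _⟩
    rw [hO]
    exact rnk_mem hlt
  · intro p hp
    have hc1 := mp_card hf h0 p
    have hA1 := A_le hf h0 p
    rw [hp, card_empty] at hc1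
    have hA : A f p = (f p).card := by omega
    have hO : O f p = (f p).card + (f (p+1)).card := by
      unfold O
      rw [if_neg (by omega)]
      rfl
    have hAeq : A f (p+1) = O f p - A f p := rfl
    have hc2 := mp_card hf h0 (p+1)
    rw [← card_eq_zero]
    omega

lemma tp_zero : tp f 0 = {0} := by
  have hcard : (tp f 0).card = 1 := tp_card hf h0 0
  have hmem : 0 ∈ tp f 0 := by
    unfold tp
    refine mem_filter.mpr ⟨hf.2.1 0 h0, ?_⟩
    have := O_eq hf h0 0
    have : A f 0 = 1 := rfl
    omega
  obtain ⟨a, ha⟩ := card_eq_one.mp hcard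
  rw [ha] at hmem ⊢
  rw [mem_singleton] at hmem
  rw [hmem]

lemma glue_split : glue (spL f) (mp f) = f := by
  have hcns : cns {0} (spL f) = tp f := by
    funext p
    cases p with
    | zero => exact (tp_zero hf h0).symm
    | succ q => rfl
  funext p
  show mer (cns {0} (spL f)) (mp f) p = f p
  rw [hcns]
  have hoff : off (tp f) p = O f p := by
    unfold off
    rw [tp_card hf h0 p, tp_card hf h0 (p+1), O_eq hf h0 p]
  unfold mer
  rw [hoff]
  have himg : (mp f p).image (· + O f p) = (f p).filter (fun x => O f p ≤ x) := by
    unfold mp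
    ext x
    constructor
    · intro hx
      obtain ⟨y, hy, rfl⟩ := mem_image.mp hx
      obtain ⟨z, hz, rfl⟩ := mem_image.mp hy
      have hz' := mem_filter.mp hz
      rw [Nat.sub_add_cancel hz'.2]
      exact hz
    · intro hx
      have hx' := mem_filter.mp hx
      exact mem_image.mpr ⟨x - O f p, mem_image.mpr ⟨x, hx, rfl⟩, Nat.sub_add_cancel hx'.2⟩
  rw [himg]
  ext x
  simp only [tp, mem_union, mem_filter]
  constructor
  · rintro (⟨h, _⟩ | ⟨h, _⟩) <;> exact h
  · intro hx
    rcases lt_or_ge x (O f p) with h | h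
    · exact Or.inl ⟨hx, h⟩
    · exact Or.inr ⟨hx, h⟩

lemma total_split {n : ℕ} (ht : Total f n) :
    ∃ n1 n2, Total (spL f) n1 ∧ Total (mp f) n2 ∧ n = n1 + n2 + 1 := by
  obtain ⟨k, hb, hs⟩ := ht
  have hbL : Bnd (spL f) k := by
    intro p hp
    have he : f (p+1) = ∅ := hb (p+1) (by omega)
    simp [spL, tp, he]
  have hbM : Bnd (mp f) k := by
    intro p hp
    have he : f p = ∅ := hb p (by omega)
    simp [mp, he]
  refine ⟨∑ p ∈ Finset.range k, (spL f p).card, ∑ p ∈ Finset.range k, (mp f p).card,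
    ⟨k, hbL, rfl⟩, ⟨k, hbM, rfl⟩, ?_⟩
  have hcol : ∀ p, (f p).card = (tp f p).card + (mp f p).card := by
    intro p
    rw [tp_card hf h0 p, mp_card hf h0 p]
    have := A_le hf h0 p
    omega
  have hsum : ∑ p ∈ Finset.range (k+1), (f p).card = n := by
    rw [sum_ext hb (by omega), hs]
  have h1 : ∑ p ∈ Finset.range (k+1), (tp f p).card
      = 1 + ∑ p ∈ Finset.range k, (spL f p).card := by
    rw [Finset.sum_range_succ', tp_zero hf h0, card_singleton]
    simp only [spL]
    omega
  have h2 : ∑ p ∈ Finset.range (k+1), (mp f p).card = ∑ p ∈ Finset.range k, (mp f p).card :=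
    sum_ext hbM (by omega)
  have h3 : ∑ p ∈ Finset.range (k+1), (f p).card
      = ∑ p ∈ Finset.range (k+1), ((tp f p).card + (mp f p).card) :=
    Finset.sum_congr rfl (fun p _ => hcol p)
  rw [Finset.sum_add_distrib] at h3
  omega

end split

lemma split_mer {T g : ℕ → Finset ℕ} (hvT : Valid T) (hg : Valid g)
    (hT0 : (T 0).card = 1) :
    (∀ p, tp (mer T g) p = T p) ∧ mp (mer T g) = g := by
  have hcard : ∀ p, (mer T g p).card = (T p).card + (g p).card := fun p => mer_card hvT p
  have hstep : ∀ p, A (mer T g) p = (T p).card → O (mer T g) p = off T p := by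
    intro p hAp
    rcases (g p).eq_empty_or_nonempty with hgp | hgp
    · have hgp1 : g (p+1) = ∅ := hg.2.2 p hgp
      have hnlt : ¬ A (mer T g) p < (mer T g p).card := by
        rw [hAp, hcard p, hgp, card_empty]
        omega
      unfold O
      rw [if_neg hnlt]
      unfold off
      rw [hcard p, hcard (p+1), hgp, hgp1]
      simp
    · have h0g : 0 ∈ g p := hg.2.1 p hgp
      have hmem : off T p ∈ mer T g p := by
        unfold mer
        exact mem_union_right _ (mem_image.mpr ⟨0, h0g, by omega⟩)
      have hfilter : (mer T g p).filter (· < off T p) = T p := by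
        ext x
        simp only [mem_filter]
        constructor
        · rintro ⟨hx, hxlt⟩
          unfold mer at hx
          rcases mem_union.mp hx with h | h
          · exact h
          · exact absurd hxlt (by have := mem_shifted (f := T) h; omega)
        · intro hx
          exact ⟨mem_union_left _ hx, hvT.1 p x hx⟩
      have hlt : A (mer T g) p < (mer T g p).card := by
        rw [hAp, hcard p]
        have := card_pos.mpr hgp
        omega
      unfold O
      rw [if_pos hlt]
      exact rnk_eq hmem (by rw [hfilter, hAp])
  have hA : ∀ p, A (mer T g) p = (T p).card := by
    intro p
    induction p with
    | zero =>
      show (1 : ℕ) = (T 0).card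
      omega
    | succ q ih =>
      have hOq := hstep q ih
      have hAeq : A (mer T g) (q+1) = O (mer T g) q - A (mer T g) q := rfl
      rw [hAeq, hOq, ih]
      unfold off
      omega
  have htp : ∀ p, tp (mer T g) p = T p := by
    intro p
    unfold tp
    rw [hstep p (hA p)]
    ext x
    simp only [mem_filter]
    constructor
    · rintro ⟨hx, hxlt⟩
      unfold mer at hx
      rcases mem_union.mp hx with h | h
      · exact h
      · exact absurd hxlt (by have := mem_shifted (f := T) h; omega)
    · intro hx
      exact ⟨mem_union_left _ hx, hvT.1 p x hx⟩
  refine ⟨htp, ?_⟩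
  funext p
  unfold mp
  rw [hstep p (hA p)]
  have hfge : (mer T g p).filter (fun x => off T p ≤ x) = (g p).image (· + off T p) := by
    ext x
    simp only [mem_filter]
    constructor
    · rintro ⟨hx, hge⟩
      unfold mer at hx
      rcases mem_union.mp hx with h | h
      · exact absurd hge (by have := hvT.1 p x h; unfold off at this ⊢; omega)
      · exact h
    · intro hx
      exact ⟨mem_union_right _ hx, mem_shifted (f := T) hx⟩
  rw [hfge, Finset.image_image]
  have hid : ((fun x => x - off T p) ∘ (fun y => y + off T p)) = id := by
    funext y
    simp
  rw [hid, Finset.image_id]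

lemma split_glue {f g : ℕ → Finset ℕ} (hf : Valid f) (hg : Valid g) :
    spL (glue f g) = f ∧ mp (glue f g) = g := by
  have h := split_mer (valid_cns hf) hg (by simp [cns])
  constructor
  · funext p
    exact h.1 (p+1)
  · exact h.2

/-! ### counting -/

def Sn (n : ℕ) : Type := {f : ℕ → Finset ℕ // Valid f ∧ Total f n}

instance finite_Sn (n : ℕ) : Finite (Sn n) := by
  let F : Sn n → (Fin n → {s // s ∈ (Finset.range n).powerset}) := fun f i =>
    ⟨f.1 i, mem_powerset.mpr (fun x hx => mem_range.mpr (mem_lt_of_total f.2.1 f.2.2 hx))⟩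
  have hinj : Function.Injective F := by
    intro f g h
    apply Subtype.ext
    funext p
    by_cases hp : p < n
    · have h' := congrFun h ⟨p, hp⟩
      exact Subtype.ext_iff.mp h'
    · rw [bnd_of_total f.2.1 f.2.2 p (by omega), bnd_of_total g.2.1 g.2.2 p (by omega)]
  exact Finite.of_injective F hinj

lemma card_Sn_zero : Nat.card (Sn 0) = 1 := by
  rw [Nat.card_eq_one_iff_unique]
  constructor
  · constructor
    intro x y
    apply Subtype.ext
    funext p
    rw [bnd_of_total x.2.1 x.2.2 p (Nat.zero_le p), bnd_of_total y.2.1 y.2.2 p (Nat.zero_le p)]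
  · exact ⟨⟨fun _ => ∅, ⟨fun p x hx => absurd hx (notMem_empty x),
      fun p hp => absurd hp (by simp), fun p _ => rfl⟩, ⟨0, fun p _ => rfl, by simp⟩⟩⟩

lemma card_Sn_succ (n : ℕ) :
    Nat.card (Sn (n+1)) = ∑ i : Fin (n+1), Nat.card (Sn i) * Nat.card (Sn (n - i)) := by
  classical
  haveI : ∀ m, Fintype (Sn m) := fun m => Fintype.ofFinite _
  let Φ : (Σ i : Fin (n+1), Sn i × Sn (n - i)) → Sn (n+1) := fun x =>
    ⟨glue x.2.1.1 x.2.2.1, valid_glue x.2.1.2.1 x.2.2.2.1, by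
      have h := total_glue x.2.1.2.1 x.2.2.2.1 x.2.1.2.2 x.2.2.2.2
      have hx : (x.1 : ℕ) + (n - (x.1 : ℕ)) + 1 = n + 1 := by
        have := x.1.isLt
        omega
      rwa [hx] at h⟩
  have hbij : Function.Bijective Φ := by
    constructor
    · rintro ⟨i, ⟨f, hf⟩, ⟨g, hg⟩⟩ ⟨j, ⟨f', hf'⟩, ⟨g', hg'⟩⟩ h
      have h' : glue f g = glue f' g' := congrArg Subtype.val h
      have e1 := (split_glue hf.1 hg.1).1
      have e2 := (split_glue hf'.1 hg'.1).1
      have e3 := (split_glue hf.1 hg.1).2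
      have e4 := (split_glue hf'.1 hg'.1).2
      rw [h'] at e1 e3
      have h1 : f = f' := e1.symm.trans e2
      have h2 : g = g' := e3.symm.trans e4
      have hfj : Total f (j : ℕ) := by rw [h1]; exact hf'.2
      have hij : i = j := Fin.ext (total_unique hf.2 hfj)
      subst hij
      subst h1
      subst h2
      rfl
    · rintro ⟨h, hv, ht⟩
      have h00 : (h 0).Nonempty := by
        rcases (h 0).eq_empty_or_nonempty with he | hne
        · exfalso
          have hb0 : Bnd h 0 := fun p _ => empty_chain hv he (Nat.zero_le p)
          have : (0 : ℕ) = n + 1 := total_unique ⟨0, hb0, by simp⟩ ht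
          omega
        · exact hne
      obtain ⟨n1, n2, ht1, ht2, heq⟩ := total_split hv h00 ht
      refine ⟨⟨⟨n1, by omega⟩, ⟨spL h, valid_spL hv h00, ht1⟩,
        ⟨mp h, valid_mp hv h00, ?_⟩⟩, ?_⟩
      · have hn2 : n - n1 = n2 := by omega
        show Total (mp h) (n - n1)
        rw [hn2]
        exact ht2
      · apply Subtype.ext
        exact glue_split hv h00
  rw [← Nat.card_eq_of_bijective Φ hbij]
  rw [Nat.card_eq_fintype_card, Fintype.card_sigma]
  apply Finset.sum_congr rfl
  intro i _
  rw [Fintype.card_prod, Nat.card_eq_fintype_card, Nat.card_eq_fintype_card]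

lemma card_Sn (n : ℕ) : Nat.card (Sn n) = catalan n := by
  induction n using Nat.strong_induction_on with
  | _ n ih =>
    match n with
    | 0 => exact card_Sn_zero.trans catalan_zero.symm
    | Nat.succ n =>
      rw [card_Sn_succ, catalan_succ]
      apply Finset.sum_congr rfl
      intro i _
      rw [ih i i.isLt, ih (n - (i : ℕ)) (Nat.lt_succ_of_le (Nat.sub_le n i))]

/-! ### transfer to `IsCat` -/

def toD (n : ℕ) (f : ℕ → Finset ℕ) : Finset (ℕ × ℕ) :=
  (Finset.range n).biUnion (fun p => (f p).image (fun j => (p, j)))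

lemma mem_toD {n : ℕ} {f : ℕ → Finset ℕ} (hb : Bnd f n) {p j : ℕ} :
    (p, j) ∈ toD n f ↔ j ∈ f p := by
  unfold toD
  simp only [mem_biUnion, mem_range, mem_image]
  constructor
  · rintro ⟨q, hq, y, hy, he⟩
    obtain ⟨rfl, rfl⟩ : q = p ∧ y = j := by
      constructor
      · exact congrArg Prod.fst he
      · exact congrArg Prod.snd he
    exact hy
  · intro hj
    have hp : p < n := by
      by_contra h'
      rw [hb p (by omega)] at hj
      exact absurd hj (notMem_empty j)
    exact ⟨p, hp, j, hj, rfl⟩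

lemma col_toD {n : ℕ} {f : ℕ → Finset ℕ} (hb : Bnd f n) (p : ℕ) :
    col (toD n f) p = (f p).image (fun j => (p, j)) := by
  ext q
  obtain ⟨a, b⟩ := q
  simp only [col, mem_filter, mem_image]
  constructor
  · rintro ⟨hq, hq1⟩
    have ha : a = p := hq1
    subst ha
    exact ⟨b, (mem_toD hb).mp hq, rfl⟩
  · rintro ⟨j, hj, he⟩
    obtain ⟨rfl, rfl⟩ : p = a ∧ j = b := by
      constructor
      · exact congrArg Prod.fst he
      · exact congrArg Prod.snd he
    exact ⟨(mem_toD hb).mpr hj, rfl⟩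

lemma col_disjoint {D : Finset (ℕ × ℕ)} {x y : ℕ} (hxy : x ≠ y) :
    Disjoint (col D x) (col D y) := by
  rw [disjoint_left]
  intro a ha ha'
  exact hxy (((mem_filter.mp ha).2.symm).trans (mem_filter.mp ha').2)

lemma isCat_toD {n : ℕ} {f : ℕ → Finset ℕ} (hv : Valid f) (ht : Total f n) :
    IsCat n (toD n f) := by
  have hb : Bnd f n := bnd_of_total hv ht
  have hcolcard : ∀ p, (col (toD n f) p).card = (f p).card := by
    intro p
    rw [col_toD hb p]
    exact card_image_of_injective _ (fun x y h => congrArg Prod.snd h)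
  refine ⟨?_, ?_, ?_⟩
  · unfold toD
    rw [card_biUnion]
    · have hc : ∀ p ∈ Finset.range n, ((f p).image (fun j => (p, j))).card = (f p).card :=
        fun p _ => card_image_of_injective _ (fun x y h => congrArg Prod.snd h)
      rw [Finset.sum_congr rfl hc, total_sum hv ht n le_rfl]
    · intro x _ y _ hxy
      rw [Function.onFun, disjoint_left]
      rintro q hq hq'
      obtain ⟨j, _, rfl⟩ := mem_image.mp hq
      obtain ⟨j', _, he⟩ := mem_image.mp hq'
      exact hxy ((congrArg Prod.fst he).symm)
  · intro p i hp hip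
    rw [mem_toD hb] at hp ⊢
    have hne : (f i).Nonempty := by
      by_contra h'
      rw [not_nonempty_iff_eq_empty] at h'
      rw [empty_chain hv h' hip] at hp
      exact absurd hp (notMem_empty 0)
    exact hv.2.1 i hne
  · intro p
    constructor
    · intro hne
      rw [hcolcard, hcolcard]
      have himg : (col (toD n f) p).image Prod.snd = f p := by
        rw [col_toD hb p, Finset.image_image]
        have hcomp : (Prod.snd ∘ fun j : ℕ => (p, j)) = id := rfl
        rw [hcomp, Finset.image_id]
      rw [himg]
      have hfne : (f p).Nonempty := by
        obtain ⟨q, hq⟩ := hne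
        rw [col_toD hb p] at hq
        obtain ⟨j, hj, _⟩ := mem_image.mp hq
        exact ⟨j, hj⟩
      have hsuplt : (f p).sup id < (f p).card + (f (p+1)).card := by
        rw [Finset.sup_lt_iff (by simp only [bot_eq_zero]; have := card_pos.mpr hfne; omega)]
        intro x hx
        exact hv.1 p x hx
      omega
    · intro hemp q hq
      have hfp : f p = ∅ := by
        by_contra h'
        obtain ⟨x, hx⟩ := nonempty_iff_ne_empty.mpr h'
        have hmem : (p, x) ∈ col (toD n f) p := by
          rw [col_toD hb p]
          exact mem_image_of_mem _ hx
        rw [hemp] at hmem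
        exact absurd hmem (notMem_empty _)
      obtain ⟨a, b⟩ := q
      have hab : b ∈ f a := (mem_toD hb).mp hq
      show a < p
      by_contra h'
      rw [empty_chain hv hfp (by omega)] at hab
      exact absurd hab (notMem_empty b)

def fD (D : Finset (ℕ × ℕ)) : ℕ → Finset ℕ := fun p => (col D p).image Prod.snd

lemma isCat_to_Sn {n : ℕ} {D : Finset (ℕ × ℕ)} (h : IsCat n D) :
    Valid (fD D) ∧ Total (fD D) n ∧ toD n (fD D) = D := by
  obtain ⟨hcard, hrow, hcond⟩ := h
  have hmemf : ∀ p j, j ∈ fD D p ↔ (p, j) ∈ D := by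
    intro p j
    constructor
    · intro hj
      obtain ⟨q, hq, rfl⟩ := mem_image.mp hj
      obtain ⟨hqD, hq1⟩ := mem_filter.mp hq
      have he : (p, q.2) = q := by
        rw [← hq1]
      rw [he]
      exact hqD
    · intro hj
      exact mem_image.mpr ⟨(p, j), mem_filter.mpr ⟨hj, rfl⟩, rfl⟩
  have hcardf : ∀ p, (fD D p).card = (col D p).card := by
    intro p
    apply card_image_of_injOn
    intro x hx y hy hxy
    have hx1 := (mem_filter.mp (by exact hx : x ∈ col D p)).2
    have hy1 := (mem_filter.mp (by exact hy : y ∈ col D p)).2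
    have : x.1 = y.1 := hx1.trans hy1.symm
    exact Prod.ext this hxy
  have hbound : ∀ q ∈ D, q.1 < n := by
    intro q hq
    by_contra h'
    push_neg at h'
    have hne : ∀ i, i ≤ q.1 → (col D i).Nonempty := by
      intro i hi
      rcases (col D i).eq_empty_or_nonempty with he | hne
      · exfalso
        have := (hcond i).2 he q hq
        omega
      · exact hne
    have hsub : (Finset.range (q.1+1)).biUnion (fun i => col D i) ⊆ D := by
      intro x hx
      obtain ⟨i, _, hxi⟩ := mem_biUnion.mp hx
      exact (mem_filter.mp hxi).1
    have hge : q.1 + 1 ≤ D.card := by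
      calc q.1 + 1 = ∑ _i ∈ Finset.range (q.1+1), 1 := by simp
        _ ≤ ∑ i ∈ Finset.range (q.1+1), (col D i).card := by
            refine Finset.sum_le_sum (fun i hi => ?_)
            simp only [mem_range] at hi
            exact card_pos.mpr (hne i (by omega))
        _ = ((Finset.range (q.1+1)).biUnion (fun i => col D i)).card :=
            (card_biUnion (fun x _ y _ hxy => col_disjoint hxy)).symm
        _ ≤ D.card := card_le_card hsub
    omega
  have hbf : Bnd (fD D) n := by
    intro p hp
    rw [eq_empty_iff_forall_notMem]
    intro j hj
    have := hbound (p, j) ((hmemf p j).mp hj)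
    simp only at this
    omega
  have htoD : toD n (fD D) = D := by
    ext q
    obtain ⟨a, b⟩ := q
    rw [mem_toD hbf, hmemf]
  have hvf : Valid (fD D) := by
    refine ⟨?_, ?_, ?_⟩
    · intro p x hx
      have hnecol : (col D p).Nonempty := by
        obtain ⟨q, hq, _⟩ := mem_image.mp hx
        exact ⟨q, hq⟩
      have hsup := (hcond p).1 hnecol
      have hle : x ≤ ((col D p).image Prod.snd).sup id := le_sup (f := id) hx
      rw [hcardf p, hcardf (p+1)]
      omega
    · intro p hp
      obtain ⟨x, hx⟩ := hp
      have hpD : (p, x) ∈ D := (hmemf p x).mp hx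
      have hPne : (D.image Prod.fst).Nonempty := ⟨p, mem_image_of_mem _ hpD⟩
      have hmD : ∃ j, ((D.image Prod.fst).max' hPne, j) ∈ D := by
        have hmm := (D.image Prod.fst).max'_mem hPne
        obtain ⟨q, hq, he⟩ := mem_image.mp hmm
        refine ⟨q.2, ?_⟩
        have : ((D.image Prod.fst).max' hPne, q.2) = q := by
          rw [← he]
        rwa [this]
      obtain ⟨jm, hjm⟩ := hmD
      set m := (D.image Prod.fst).max' hPne with hm
      have hcolm1 : col D (m+1) = ∅ := by
        rw [eq_empty_iff_forall_notMem]
        intro q hq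
        obtain ⟨hqD, hq1⟩ := mem_filter.mp hq
        have : q.1 ≤ m := le_max' _ _ (mem_image_of_mem _ hqD)
        omega
      have hcolmne : (col D m).Nonempty := ⟨(m, jm), mem_filter.mpr ⟨hjm, rfl⟩⟩
      have hsup := (hcond m).1 hcolmne
      rw [hcolm1, card_empty] at hsup
      have hfm : fD D m ⊆ Finset.range (fD D m).card := by
        intro y hy
        rw [mem_range]
        have h1 : y ≤ ((col D m).image Prod.snd).sup id := le_sup (f := id) hy
        rw [hcardf m]
        omega
      have hfme : fD D m = Finset.range (fD D m).card :=
        eq_of_subset_of_card_le hfm (by rw [card_range])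
      have h0m : (m, 0) ∈ D := by
        rw [← hmemf]
        rw [hfme, mem_range]
        exact card_pos.mpr ⟨jm, (hmemf m jm).mpr hjm⟩
      have hpm : p ≤ m := le_max' (D.image Prod.fst) p (mem_image_of_mem Prod.fst hpD)
      exact (hmemf p 0).mpr (hrow m p h0m hpm)
    · intro p hp
      have hcol0 : col D p = ∅ := by
        rw [eq_empty_iff_forall_notMem]
        intro q hq
        have hq2 : q.2 ∈ fD D p := mem_image_of_mem _ hq
        rw [hp] at hq2
        exact absurd hq2 (notMem_empty _)
      rw [eq_empty_iff_forall_notMem]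
      intro j hj
      have := (hcond p).2 hcol0 (p+1, j) ((hmemf _ _).mp hj)
      omega
  refine ⟨hvf, ⟨n, hbf, ?_⟩, htoD⟩
  have hD : D = (Finset.range n).biUnion (fun p => col D p) := by
    ext q
    simp only [mem_biUnion, mem_range]
    constructor
    · intro hq
      exact ⟨q.1, hbound q hq, mem_filter.mpr ⟨hq, rfl⟩⟩
    · rintro ⟨i, _, hqi⟩
      exact (mem_filter.mp hqi).1
  calc ∑ p ∈ Finset.range n, (fD D p).card
      = ∑ p ∈ Finset.range n, (col D p).card := Finset.sum_congr rfl (fun p _ => hcardf p)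
    _ = ((Finset.range n).biUnion (fun p => col D p)).card :=
        (card_biUnion (fun x _ y _ hxy => col_disjoint hxy)).symm
    _ = D.card := by rw [← hD]
    _ = n := hcard

lemma card_isCat (n : ℕ) : Nat.card {D : Finset (ℕ × ℕ) // IsCat n D} = Nat.card (Sn n) := by
  have hbij : Function.Bijective
      (fun f : Sn n => (⟨toD n f.1, isCat_toD f.2.1 f.2.2⟩ : {D : Finset (ℕ × ℕ) // IsCat n D})) := by
    constructor
    · intro f g h
      apply Subtype.ext
      have h' : toD n f.1 = toD n g.1 := congrArg Subtype.val h
      funext p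
      ext j
      rw [← mem_toD (bnd_of_total f.2.1 f.2.2), h', mem_toD (bnd_of_total g.2.1 g.2.2)]
    · rintro ⟨D, hD⟩
      obtain ⟨hv, ht, he⟩ := isCat_to_Sn hD
      exact ⟨⟨fD D, hv, ht⟩, Subtype.ext he⟩
  exact (Nat.card_eq_of_bijective _ hbij).symm

end Cat9

/-- `#𝔇_n^{catalan}` equals the Catalan number `C(2n,n)/(n+1)`. -/
theorem stmt9 (n : ℕ) (hn : 1 ≤ n) :
    Nat.card {D : Finset (ℕ × ℕ) // IsCat n D} = (2 * n).choose n / (n + 1) := by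
  rw [Cat9.card_isCat, Cat9.card_Sn, catalan_eq_centralBinom_div]
  rfl
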